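/- Let Ω = ℝ × (0,d), α₀ ∈ ℝ, and φ ∈ L²(∂Ω). There exist constants c, C > 0 depending only on d and |α₀| such that every weak solution Ψ ∈ W^{1,2}(Ω) of −ΔΨ − zΨ = 0 in Ω with boundary condition ∂₂Ψ + iα₀Ψ = φ on ∂Ω, for any real z ≤ −c, satisfies ‖Ψ‖_{W^{1,2}(Ω)} ≤ C ‖φ‖_{L²(∂Ω)}. -/

import Mathlib

open MeasureTheory Set Filter Topology

private lemma opnorm_le_sum' (L : ℝ × ℝ →L[ℝ] ℂ) : ‖L‖ ≤ ‖L (1,0)‖ + ‖L (0,1)‖ := by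
  refine ContinuousLinearMap.opNorm_le_bound _ (by positivity) fun v => ?_
  have hv : L v = v.1 • L (1,0) + v.2 • L (0,1) := by
    have hv0 : v = v.1 • ((1:ℝ),(0:ℝ)) + v.2 • ((0:ℝ),(1:ℝ)) := by ext <;> simp
    conv_lhs => rw [hv0]
    rw [map_add, L.map_smul, L.map_smul]
  have h1 : |v.1| ≤ ‖v‖ := by simpa using norm_fst_le v
  have h2 : |v.2| ≤ ‖v‖ := by simpa using norm_snd_le v
  calc ‖L v‖ ≤ ‖v.1 • L (1,0)‖ + ‖v.2 • L (0,1)‖ := by rw [hv]; exact norm_add_le _ _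
    _ = |v.1| * ‖L (1,0)‖ + |v.2| * ‖L (0,1)‖ := by rw [norm_smul, norm_smul]; simp
    _ ≤ (‖L (1,0)‖ + ‖L (0,1)‖) * ‖v‖ := by
        have := norm_nonneg (L (1,0)); have := norm_nonneg (L (0,1)); nlinarith

private lemma integral_deriv_eq_zero' (f f' : ℝ → ℝ) (hd : ∀ x, HasDerivAt f (f' x) x)
    (hf : Integrable f) (hf' : Integrable f') : ∫ x, f' x = 0 := by
  have h1 : Tendsto f atTop (𝓝 0) :=
    tendsto_zero_of_hasDerivAt_of_integrableOn_Ioi (a := 0) (fun x _ => hd x)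
      hf'.integrableOn hf.integrableOn
  have h2 : Tendsto f atBot (𝓝 0) :=
    tendsto_zero_of_hasDerivAt_of_integrableOn_Iic (a := 0) (fun x _ => hd x)
      hf'.integrableOn hf.integrableOn
  have e1 : ∫ x in Ioi 0, f' x = 0 - f 0 :=
    integral_Ioi_of_hasDerivAt_of_tendsto' (fun x _ => hd x) hf'.integrableOn h1
  have e2 : ∫ x in Iic 0, f' x = f 0 - 0 :=
    integral_Iic_of_hasDerivAt_of_tendsto' (fun x _ => hd x) hf'.integrableOn h2
  rw [← intervalIntegral.integral_Iic_add_Ioi (b := 0) hf'.integrableOn hf'.integrableOn, e1, e2]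
  ring

private lemma hasDerivAt_fst' {g : ℝ × ℝ → ℂ} (hg : Differentiable ℝ g) (b t : ℝ) :
    HasDerivAt (fun s => g (s, b)) (fderiv ℝ g (t, b) (1, 0)) t := by
  have h1 : HasFDerivAt (fun s : ℝ => (s, b)) ((ContinuousLinearMap.id ℝ ℝ).prod 0) t :=
    (hasFDerivAt_id t).prodMk (hasFDerivAt_const b t)
  have := ((hg (t, b)).hasFDerivAt.comp t h1).hasDerivAt
  simpa [Function.comp_def] using this

private lemma hasDerivAt_snd' {g : ℝ × ℝ → ℂ} (hg : Differentiable ℝ g) (a t : ℝ) :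
    HasDerivAt (fun s => g (a, s)) (fderiv ℝ g (a, t) (0, 1)) t := by
  have h1 : HasFDerivAt (fun s : ℝ => (a, s))
      ((0 : ℝ →L[ℝ] ℝ).prod (ContinuousLinearMap.id ℝ ℝ)) t :=
    (hasFDerivAt_const a t).prodMk (hasFDerivAt_id t)
  have := ((hg (a, t)).hasFDerivAt.comp t h1).hasDerivAt
  simpa [Function.comp_def] using this

private lemma HasDerivAt.conj'' {f : ℝ → ℂ} {f' : ℂ} {t : ℝ} (h : HasDerivAt f f' t) :
    HasDerivAt (fun s => (starRingEnd ℂ) (f s)) ((starRingEnd ℂ) f') t := by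
  simpa [Function.comp_def, Complex.conjCAE_apply] using (Complex.conjCLE.hasFDerivAt.comp_hasDerivAt t h)

private lemma HasDerivAt.creal {f : ℝ → ℂ} {f' : ℂ} {t : ℝ} (h : HasDerivAt f f' t) :
    HasDerivAt (fun s => (f s).re) f'.re t := by
  simpa [Function.comp_def] using (Complex.reCLM.hasFDerivAt.comp_hasDerivAt t h)

private lemma hasDerivAt_re_mul_conj' {A B : ℝ → ℂ} {A' B' : ℂ} {t : ℝ}
    (hA : HasDerivAt A A' t) (hB : HasDerivAt B B' t) :
    HasDerivAt (fun s => (A s * (starRingEnd ℂ) (B s)).re)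
      ((A' * (starRingEnd ℂ) (B t)).re + (A t * (starRingEnd ℂ) B').re) t := by
  have := ((hA.mul hB.conj'')).creal
  simpa [Complex.add_re] using this

private lemma re_mul_conj_self (w : ℂ) : (w * (starRingEnd ℂ) w).re = ‖w‖^2 := by
  rw [Complex.mul_conj]
  simp [Complex.sq_norm]

private lemma re_mul_conj_comm (w v : ℂ) : (w * (starRingEnd ℂ) v).re = (v * (starRingEnd ℂ) w).re := by
  rw [← Complex.conj_re (w * (starRingEnd ℂ) v)]
  simp [map_mul, mul_comm]

private lemma amgm' {K f v : ℝ} (hK : 0 < K) : f * v ≤ (1/(2*K)) * v^2 + (K/2) * f^2 := by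
  have h2 : f*v*(2*K) ≤ v^2 + K^2*f^2 := by nlinarith [sq_nonneg (v - K*f)]
  have h3 : (0:ℝ) < 2*K := by positivity
  calc f*v = f*v*(2*K)/(2*K) := by field_simp
    _ ≤ (v^2 + K^2*f^2)/(2*K) := by gcongr
    _ = (1/(2*K)) * v^2 + (K/2) * f^2 := by field_simp

private lemma amgm2 {K f v : ℝ} (hK1 : (1:ℝ) ≤ K) : f*v ≤ K/2 * f^2 + v^2/2 + v^2/2 := by
  nlinarith [sq_nonneg (f - v), mul_nonneg (by linarith : (0:ℝ) ≤ K - 1) (sq_nonneg f)]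

private lemma abs_re_mul_conj (w v : ℂ) : |(w * (starRingEnd ℂ) v).re| ≤ ‖w‖ * ‖v‖ := by
  calc |(w * (starRingEnd ℂ) v).re| ≤ ‖w * (starRingEnd ℂ) v‖ :=
        Complex.abs_re_le_norm _
    _ = ‖w‖ * ‖v‖ := by simp [map_mul]

set_option maxHeartbeats 1600000 in
/-- a priori estimate for the boundary value problem
`-ΔΨ - zΨ = 0` in `Ω = ℝ × (0,d)` with `∂₂Ψ + iα₀Ψ = φ` on `∂Ω`:
there are `c, C > 0` (depending only on `d` and `|α₀|`) such that any solution
`Ψ ∈ W^{1,2}(Ω)` with `z ≤ -c` satisfies `‖Ψ‖_{W^{1,2}(Ω)} ≤ C‖φ‖_{L²(∂Ω)}`. -/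
theorem stmt14 (d : ℝ) (hd : 0 < d) (α₀ : ℝ) :
    ∃ c C : ℝ, 0 < c ∧ 0 < C ∧
      ∀ (z : ℝ), z ≤ -c →
      ∀ (φ0 φd : ℝ → ℂ), MemLp φ0 2 volume → MemLp φd 2 volume →
      ∀ (Ψ : ℝ × ℝ → ℂ), ContDiff ℝ 2 Ψ →
        MemLp Ψ 2 (volume.restrict (Set.univ ×ˢ Set.Ioo 0 d)) →
        MemLp (fun x => fderiv ℝ Ψ x) 2
          (volume.restrict (Set.univ ×ˢ Set.Ioo 0 d)) →
        -- the equation `-ΔΨ = zΨ` in `Ω`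
        (∀ x ∈ (Set.univ ×ˢ Set.Ioo (0 : ℝ) d),
          -(fderiv ℝ (fun y => fderiv ℝ Ψ y (1, 0)) x (1, 0) +
              fderiv ℝ (fun y => fderiv ℝ Ψ y (0, 1)) x (0, 1)) =
            (z : ℂ) * Ψ x) →
        -- the boundary conditions `∂₂Ψ + iα₀Ψ = φ` on the two boundary lines
        (∀ x₁ : ℝ, fderiv ℝ Ψ (x₁, 0) (0, 1) + Complex.I * α₀ * Ψ (x₁, 0) = φ0 x₁) →
        (∀ x₁ : ℝ, fderiv ℝ Ψ (x₁, d) (0, 1) + Complex.I * α₀ * Ψ (x₁, d) = φd x₁) →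
        Real.sqrt ((∫ x in (Set.univ ×ˢ Set.Ioo (0 : ℝ) d), ‖Ψ x‖ ^ 2) +
            ∫ x in (Set.univ ×ˢ Set.Ioo (0 : ℝ) d), ‖fderiv ℝ Ψ x‖ ^ 2) ≤
          C * Real.sqrt ((∫ x₁ : ℝ, ‖φ0 x₁‖ ^ 2) + ∫ x₁ : ℝ, ‖φd x₁‖ ^ 2) := by
  classical
  set K₀ : ℝ := 2/d + 2 with hK₀def
  have hK₀ : 0 < K₀ := by positivity
  have hK₀1 : (1:ℝ) ≤ K₀ := by
    have h2d : (0:ℝ) < 2/d := by positivity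
    rw [hK₀def]; linarith
  clear_value K₀
  refine ⟨1, Real.sqrt (2 * K₀), one_pos, Real.sqrt_pos.mpr (by linarith), ?_⟩
  intro z hz φ0 φd hφ0 hφd u hu hL2 hD2 hpde hb0 hbd
  -- basic regularity
  have hdu : Differentiable ℝ u := hu.differentiable (by norm_num)
  have hfd : ContDiff ℝ 1 (fun x => fderiv ℝ u x) := hu.fderiv_right (m := 1) (by norm_num)
  set P₁ : ℝ × ℝ → ℂ := fun x => fderiv ℝ u x (1, 0) with hP₁def
  set P₂ : ℝ × ℝ → ℂ := fun x => fderiv ℝ u x (0, 1) with hP₂def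
  have hP1c : ContDiff ℝ 1 P₁ := hfd.clm_apply contDiff_const
  have hP2c : ContDiff ℝ 1 P₂ := hfd.clm_apply contDiff_const
  set Q₁ : ℝ × ℝ → ℂ := fun x => fderiv ℝ P₁ x (1, 0) with hQ₁def
  set Q₂ : ℝ × ℝ → ℂ := fun x => fderiv ℝ P₂ x (0, 1) with hQ₂def
  have hQ1c : Continuous Q₁ :=
    ((hP1c.fderiv_right (m := 0) (by norm_num)).clm_apply contDiff_const).continuous
  have hQ2c : Continuous Q₂ :=
    ((hP2c.fderiv_right (m := 0) (by norm_num)).clm_apply contDiff_const).continuous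
  have hDc : Continuous (fun x => fderiv ℝ u x) := hfd.continuous
  have huc : Continuous u := hu.continuous
  have hP1cc : Continuous P₁ := hP1c.continuous
  have hP2cc : Continuous P₂ := hP2c.continuous
  have hconj : Continuous (fun w : ℂ => (starRingEnd ℂ) w) := Complex.continuous_conj
  -- the domain and measure
  set Ω : Set (ℝ × ℝ) := Set.univ ×ˢ Set.Ioo (0 : ℝ) d with hΩdef
  set ν : Measure (ℝ × ℝ) := volume.restrict Ω with hνdef
  have hprod : ν = (volume : Measure ℝ).prod ((volume : Measure ℝ).restrict (Ioo 0 d)) := by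
    rw [hνdef, hΩdef, Measure.volume_eq_prod, ← Measure.prod_restrict, Measure.restrict_univ]
  -- basic integrabilities over Ω
  have he1 : ‖((1:ℝ),(0:ℝ))‖ = 1 := by simp [Prod.norm_def]
  have he2 : ‖((0:ℝ),(1:ℝ))‖ = 1 := by simp [Prod.norm_def]
  have iM : Integrable (fun x => ‖u x‖^2) ν :=
    (memLp_two_iff_integrable_sq_norm huc.aestronglyMeasurable).1 hL2
  have iD : Integrable (fun x => ‖fderiv ℝ u x‖^2) ν :=
    (memLp_two_iff_integrable_sq_norm hDc.aestronglyMeasurable).1 hD2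
  have hP1le : ∀ x, ‖P₁ x‖ ≤ ‖fderiv ℝ u x‖ := by
    intro x
    calc ‖P₁ x‖ ≤ ‖fderiv ℝ u x‖ * ‖((1:ℝ),(0:ℝ))‖ := (fderiv ℝ u x).le_opNorm _
      _ = ‖fderiv ℝ u x‖ := by rw [he1, mul_one]
  have hP2le : ∀ x, ‖P₂ x‖ ≤ ‖fderiv ℝ u x‖ := by
    intro x
    calc ‖P₂ x‖ ≤ ‖fderiv ℝ u x‖ * ‖((0:ℝ),(1:ℝ))‖ := (fderiv ℝ u x).le_opNorm _
      _ = ‖fderiv ℝ u x‖ := by rw [he2, mul_one]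
  have iP1 : Integrable (fun x => ‖P₁ x‖^2) ν := by
    refine iD.mono' (hP1cc.norm.pow 2).aestronglyMeasurable (Eventually.of_forall fun x => ?_)
    rw [Real.norm_eq_abs, abs_of_nonneg (by positivity)]
    exact pow_le_pow_left₀ (norm_nonneg _) (hP1le x) 2
  have iP2 : Integrable (fun x => ‖P₂ x‖^2) ν := by
    refine iD.mono' (hP2cc.norm.pow 2).aestronglyMeasurable (Eventually.of_forall fun x => ?_)
    rw [Real.norm_eq_abs, abs_of_nonneg (by positivity)]
    exact pow_le_pow_left₀ (norm_nonneg _) (hP2le x) 2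
  have iUP2 : Integrable (fun x => ‖u x‖ * ‖P₂ x‖) ν := by
    refine (iM.add iP2).mono' (huc.norm.mul hP2cc.norm).aestronglyMeasurable
      (Eventually.of_forall fun x => ?_)
    have hx : ((fun x => ‖u x‖ ^ 2) + fun x => ‖P₂ x‖ ^ 2) x = ‖u x‖^2 + ‖P₂ x‖^2 := rfl
    rw [hx, Real.norm_eq_abs, abs_of_nonneg (by positivity)]
    nlinarith [norm_nonneg (u x), norm_nonneg (P₂ x), sq_nonneg (‖u x‖ - ‖P₂ x‖)]
  have iUP1 : Integrable (fun x => ‖u x‖ * ‖P₁ x‖) ν := by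
    refine (iM.add iP1).mono' (huc.norm.mul hP1cc.norm).aestronglyMeasurable
      (Eventually.of_forall fun x => ?_)
    have hx : ((fun x => ‖u x‖ ^ 2) + fun x => ‖P₁ x‖ ^ 2) x = ‖u x‖^2 + ‖P₁ x‖^2 := rfl
    rw [hx, Real.norm_eq_abs, abs_of_nonneg (by positivity)]
    nlinarith [norm_nonneg (u x), norm_nonneg (P₁ x), sq_nonneg (‖u x‖ - ‖P₁ x‖)]
  -- the energy density
  set e : ℝ × ℝ → ℝ := fun x => (-z) * ‖u x‖^2 + (‖P₁ x‖^2 + ‖P₂ x‖^2) with hedef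
  have ie : Integrable e ν := (iM.const_mul _).add (iP1.add iP2)
  have ieP : Integrable e ((volume : Measure ℝ).prod ((volume : Measure ℝ).restrict (Ioo 0 d))) := by
    rw [← hprod]; exact ie
  have iMp : Integrable (fun x => ‖u x‖^2)
      ((volume : Measure ℝ).prod ((volume : Measure ℝ).restrict (Ioo 0 d))) := by
    rw [← hprod]; exact iM
  have iUP2p : Integrable (fun x => ‖u x‖ * ‖P₂ x‖)
      ((volume : Measure ℝ).prod ((volume : Measure ℝ).restrict (Ioo 0 d))) := by
    rw [← hprod]; exact iUP2
  have iMP1p : Integrable (fun x => ‖u x‖^2 + ‖P₁ x‖^2)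
      ((volume : Measure ℝ).prod ((volume : Measure ℝ).restrict (Ioo 0 d))) := by
    rw [← hprod]; exact iM.add iP1
  -- slice functions
  set h : ℝ × ℝ → ℝ := fun x => (P₁ x * (starRingEnd ℂ) (u x)).re with hhdef
  set k : ℝ × ℝ → ℝ := fun x => (P₂ x * (starRingEnd ℂ) (u x)).re with hkdef
  set h₁ : ℝ × ℝ → ℝ := fun x => (Q₁ x * (starRingEnd ℂ) (u x)).re + ‖P₁ x‖^2 with hh₁def
  set k₂ : ℝ × ℝ → ℝ := fun x => (Q₂ x * (starRingEnd ℂ) (u x)).re + ‖P₂ x‖^2 with hk₂def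
  have hhc : Continuous h := Complex.continuous_re.comp (hP1cc.mul (hconj.comp huc))
  have hkc : Continuous k := Complex.continuous_re.comp (hP2cc.mul (hconj.comp huc))
  have hh₁c : Continuous h₁ :=
    (Complex.continuous_re.comp (hQ1c.mul (hconj.comp huc))).add (hP1cc.norm.pow 2)
  have hk₂c : Continuous k₂ :=
    (Complex.continuous_re.comp (hQ2c.mul (hconj.comp huc))).add (hP2cc.norm.pow 2)
  -- derivative facts
  have Dh : ∀ b t : ℝ, HasDerivAt (fun s => h (s, b)) (h₁ (t, b)) t := by
    intro b t
    have h1 := hasDerivAt_fst' hdu b t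
    have h2 := hasDerivAt_fst' (hP1c.differentiable (by norm_num)) b t
    have h3 := hasDerivAt_re_mul_conj' h2 h1
    have : (Q₁ (t,b) * (starRingEnd ℂ) (u (t,b))).re
        + (P₁ (t,b) * (starRingEnd ℂ) (P₁ (t,b))).re = h₁ (t, b) := by
      rw [hh₁def, re_mul_conj_self]
    exact this ▸ h3
  have Dk : ∀ a t : ℝ, HasDerivAt (fun s => k (a, s)) (k₂ (a, t)) t := by
    intro a t
    have h1 := hasDerivAt_snd' hdu a t
    have h2 := hasDerivAt_snd' (hP2c.differentiable (by norm_num)) a t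
    have h3 := hasDerivAt_re_mul_conj' h2 h1
    have : (Q₂ (a,t) * (starRingEnd ℂ) (u (a,t))).re
        + (P₂ (a,t) * (starRingEnd ℂ) (P₂ (a,t))).re = k₂ (a, t) := by
      rw [hk₂def, re_mul_conj_self]
    exact this ▸ h3
  have Dusq : ∀ a t : ℝ, HasDerivAt (fun s => ‖u (a, s)‖^2) (2 * k (a, t)) t := by
    intro a t
    have h1 := hasDerivAt_snd' hdu a t
    have h3 := hasDerivAt_re_mul_conj' h1 h1
    have hfn : (fun s => (u (a,s) * (starRingEnd ℂ) (u (a,s))).re) = fun s => ‖u (a,s)‖^2 :=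
      funext fun s => re_mul_conj_self _
    have hval : (P₂ (a,t) * (starRingEnd ℂ) (u (a,t))).re
        + (u (a,t) * (starRingEnd ℂ) (P₂ (a,t))).re = 2 * k (a,t) := by
      rw [re_mul_conj_comm (u (a,t)) (P₂ (a,t)), hkdef]; ring
    rw [← hfn, ← hval]
    exact h3
  -- continuity of slices and interval integrability helpers
  have hioo : ∀ f : ℝ → ℝ, Continuous f → IntegrableOn f (Ioo 0 d) := by
    intro f hf
    exact (hf.integrableOn_Icc (a := 0) (b := d)).mono_set Ioo_subset_Icc_self
  -- Step S1 : FTC in the second variable for k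
  have hS1 : ∀ a : ℝ, ∫ t in Ioo 0 d, k₂ (a, t) = k (a, d) - k (a, 0) := by
    intro a
    have hc : Continuous (fun t => k₂ (a, t)) := hk₂c.comp (by fun_prop)
    have h1 : ∫ t in Ioo 0 d, k₂ (a, t) = ∫ t in (0:ℝ)..d, k₂ (a, t) := by
      rw [intervalIntegral.integral_of_le hd.le, integral_Ioc_eq_integral_Ioo]
    rw [h1]
    exact intervalIntegral.integral_eq_sub_of_hasDerivAt (fun t _ => Dk a t)
      (hc.intervalIntegrable 0 d)
  -- Step S2 : differentiation under the integral sign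
  set G : ℝ → ℝ := fun a => ∫ t in Ioo 0 d, h (a, t) with hGdef
  set H₁ : ℝ → ℝ := fun a => ∫ t in Ioo 0 d, h₁ (a, t) with hH₁def
  have HG : ∀ a : ℝ, HasDerivAt G (H₁ a) a := by
    intro a
    obtain ⟨Cb, hCb⟩ : ∃ Cb, ∀ x ∈ (Metric.closedBall a 1 ×ˢ Icc (0:ℝ) d), ‖h₁ x‖ ≤ Cb :=
      ((isCompact_closedBall a 1).prod isCompact_Icc).exists_bound_of_continuousOn
        hh₁c.continuousOn
    have key := hasDerivAt_integral_of_dominated_loc_of_deriv_le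
      (μ := volume.restrict (Ioo 0 d)) (F := fun x t => h (x, t)) (F' := fun x t => h₁ (x, t))
      (x₀ := a) (s := Metric.ball a 1) (bound := fun _ => Cb) (Metric.ball_mem_nhds a one_pos)
      (Eventually.of_forall fun x => (hhc.comp (by fun_prop)).aestronglyMeasurable)
      (hioo _ (hhc.comp (by fun_prop)))
      (hh₁c.comp (by fun_prop : Continuous fun t : ℝ => (a, t))).aestronglyMeasurable
      ?_ (integrableOn_const measure_Ioo_lt_top.ne) ?_
    · exact key.2
    · filter_upwards [ae_restrict_mem measurableSet_Ioo] with t ht x hx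
      exact hCb (x, t) ⟨Metric.ball_subset_closedBall hx, Ioo_subset_Icc_self ht⟩
    · refine Eventually.of_forall fun t x _ => ?_
      exact Dh t x
  -- Step S3/S4 : use the PDE on each slice
  have hS3 : ∀ a : ℝ, ∀ t ∈ Ioo (0:ℝ) d, e (a, t) = h₁ (a, t) + k₂ (a, t) := by
    intro a t ht
    have hp : -(Q₁ (a, t) + Q₂ (a, t)) = (z : ℂ) * u (a, t) := hpde (a, t) ⟨trivial, ht⟩
    have h5 : Q₁ (a, t) + Q₂ (a, t) = -((z : ℂ) * u (a, t)) := by linear_combination -hp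
    have h6 : (Q₁ (a,t) * (starRingEnd ℂ) (u (a,t))).re
        + (Q₂ (a,t) * (starRingEnd ℂ) (u (a,t))).re = (-z) * ‖u (a,t)‖^2 := by
      rw [← Complex.add_re, ← add_mul, h5]
      have h7 : -((z : ℂ) * u (a,t)) * (starRingEnd ℂ) (u (a,t))
          = ((-z : ℝ) : ℂ) * (u (a,t) * (starRingEnd ℂ) (u (a,t))) := by
        push_cast; ring
      rw [h7, Complex.re_ofReal_mul, re_mul_conj_self]
    simp only [hedef, hh₁def, hk₂def]
    linarith
  have hS4 : ∀ a : ℝ, (∫ t in Ioo 0 d, e (a, t)) = H₁ a + (k (a, d) - k (a, 0)) := by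
    intro a
    have i1 : IntegrableOn (fun t => h₁ (a, t)) (Ioo 0 d) := hioo _ (hh₁c.comp (by fun_prop))
    have i2 : IntegrableOn (fun t => k₂ (a, t)) (Ioo 0 d) := hioo _ (hk₂c.comp (by fun_prop))
    have hsp : ∫ t in Ioo 0 d, e (a, t)
        = (∫ t in Ioo 0 d, h₁ (a, t)) + ∫ t in Ioo 0 d, k₂ (a, t) := by
      rw [← integral_add i1 i2]
      exact setIntegral_congr_fun measurableSet_Ioo fun t ht => hS3 a t ht
    rw [hsp, hS1 a, hH₁def]
  -- Step S5/S6 : Fubini and the value of the energy integral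
  set M : ℝ := ∫ x in Ω, ‖u x‖^2 with hMdef
  set DD : ℝ := ∫ x in Ω, ‖fderiv ℝ u x‖^2 with hDDdef
  set A' : ℝ := ∫ x in Ω, ‖P₁ x‖^2 with hA'def
  set B' : ℝ := ∫ x in Ω, ‖P₂ x‖^2 with hB'def
  have hfub : ∫ x in Ω, e x = ∫ a : ℝ, ∫ t in Ioo 0 d, e (a, t) := by
    have : (∫ x in Ω, e x) = ∫ x, e x ∂ν := rfl
    rw [this, hprod, integral_prod _ ieP]
  have hval : ∫ x in Ω, e x = (-z) * M + (A' + B') := by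
    have h1 : (∫ x in Ω, e x) = ∫ x, e x ∂ν := rfl
    rw [h1, hedef]
    have i23 : Integrable (fun x => ‖P₁ x‖^2 + ‖P₂ x‖^2) ν := iP1.add iP2
    have iMc : Integrable (fun x => (-z) * ‖u x‖^2) ν := iM.const_mul _
    rw [integral_add iMc i23, integral_add iP1 iP2, integral_const_mul]
  -- marginals
  set Jfun : ℝ → ℝ := fun a => ∫ t in Ioo 0 d, ‖u (a,t)‖^2 with hJdef
  set Wfun : ℝ → ℝ := fun a => ∫ t in Ioo 0 d, ‖u (a,t)‖ * ‖P₂ (a,t)‖ with hWdef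
  have iJ : Integrable Jfun volume := iMp.integral_prod_left
  have iW : Integrable Wfun volume := iUP2p.integral_prod_left
  have hJint : ∫ a, Jfun a = M := by
    rw [hMdef]
    have h1 : (∫ x in Ω, ‖u x‖^2) = ∫ x, ‖u x‖^2 ∂ν := rfl
    rw [h1, hprod, integral_prod _ iMp]
  have h2W : 2 * (∫ a, Wfun a) ≤ M + B' := by
    have h0 : ∫ a, Wfun a = ∫ x, (‖u x‖ * ‖P₂ x‖) ∂ν := by
      rw [hprod, integral_prod _ iUP2p]
    have hmono : ∫ x, 2 * (‖u x‖ * ‖P₂ x‖) ∂ν ≤ ∫ x, (‖u x‖^2 + ‖P₂ x‖^2) ∂ν := by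
      refine integral_mono (iUP2.const_mul 2) (iM.add iP2) fun x => ?_
      nlinarith [sq_nonneg (‖u x‖ - ‖P₂ x‖)]
    rw [integral_const_mul, ← h0] at hmono
    rw [integral_add iM iP2] at hmono
    exact hmono
  -- trace inequalities
  have hkey0 : ∀ (a : ℝ), ∀ t ∈ Icc (0:ℝ) d, ‖u (a,0)‖^2 ≤ ‖u (a,t)‖^2 + 2 * Wfun a := by
    intro a t ht
    have hcK : Continuous (fun s => k (a,s)) := hkc.comp (by fun_prop)
    have hcUP : Continuous (fun s => 2 * (‖u (a,s)‖ * ‖P₂ (a,s)‖)) := by fun_prop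
    have hftc : ∫ s in (0:ℝ)..t, 2 * k (a,s) = ‖u (a,t)‖^2 - ‖u (a,0)‖^2 :=
      intervalIntegral.integral_eq_sub_of_hasDerivAt (fun s _ => Dusq a s)
        ((continuous_const.mul hcK).intervalIntegrable 0 t)
    have habs : |∫ s in (0:ℝ)..t, 2 * k (a,s)| ≤ ∫ s in (0:ℝ)..t, |2 * k (a,s)| :=
      intervalIntegral.abs_integral_le_integral_abs ht.1
    have hmono1 : ∫ s in (0:ℝ)..t, |2 * k (a,s)|
        ≤ ∫ s in (0:ℝ)..t, 2 * (‖u (a,s)‖ * ‖P₂ (a,s)‖) := by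
      refine intervalIntegral.integral_mono_on ht.1
        (((continuous_const.mul hcK).abs).intervalIntegrable 0 t)
        (hcUP.intervalIntegrable 0 t) fun s _ => ?_
      rw [abs_mul]
      have := abs_re_mul_conj (P₂ (a,s)) (u (a,s))
      have h2 : |k (a,s)| ≤ ‖u (a,s)‖ * ‖P₂ (a,s)‖ := by
        rw [hkdef]; rw [mul_comm (‖u (a,s)‖)] at *; exact this
      simp only [abs_two]
      nlinarith [abs_nonneg (k (a,s))]
    have hmono2 : ∫ s in (0:ℝ)..t, 2 * (‖u (a,s)‖ * ‖P₂ (a,s)‖)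
        ≤ ∫ s in (0:ℝ)..d, 2 * (‖u (a,s)‖ * ‖P₂ (a,s)‖) := by
      refine intervalIntegral.integral_mono_interval le_rfl ht.1 ht.2
        (Eventually.of_forall fun s => by positivity) (hcUP.intervalIntegrable 0 d)
    have hWrw : ∫ s in (0:ℝ)..d, 2 * (‖u (a,s)‖ * ‖P₂ (a,s)‖) = 2 * Wfun a := by
      rw [intervalIntegral.integral_of_le hd.le, integral_Ioc_eq_integral_Ioo,
        integral_const_mul, hWdef]
    linarith [neg_abs_le (∫ s in (0:ℝ)..t, 2 * k (a,s))]
  have hkeyd : ∀ (a : ℝ), ∀ t ∈ Icc (0:ℝ) d, ‖u (a,d)‖^2 ≤ ‖u (a,t)‖^2 + 2 * Wfun a := by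
    intro a t ht
    have hcK : Continuous (fun s => k (a,s)) := hkc.comp (by fun_prop)
    have hcUP : Continuous (fun s => 2 * (‖u (a,s)‖ * ‖P₂ (a,s)‖)) := by fun_prop
    have hftc : ∫ s in t..d, 2 * k (a,s) = ‖u (a,d)‖^2 - ‖u (a,t)‖^2 :=
      intervalIntegral.integral_eq_sub_of_hasDerivAt (fun s _ => Dusq a s)
        ((continuous_const.mul hcK).intervalIntegrable t d)
    have habs : |∫ s in t..d, 2 * k (a,s)| ≤ ∫ s in t..d, |2 * k (a,s)| :=
      intervalIntegral.abs_integral_le_integral_abs ht.2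
    have hmono1 : ∫ s in t..d, |2 * k (a,s)|
        ≤ ∫ s in t..d, 2 * (‖u (a,s)‖ * ‖P₂ (a,s)‖) := by
      refine intervalIntegral.integral_mono_on ht.2
        (((continuous_const.mul hcK).abs).intervalIntegrable t d)
        (hcUP.intervalIntegrable t d) fun s _ => ?_
      rw [abs_mul]
      have := abs_re_mul_conj (P₂ (a,s)) (u (a,s))
      have h2 : |k (a,s)| ≤ ‖u (a,s)‖ * ‖P₂ (a,s)‖ := by
        rw [hkdef]; rw [mul_comm (‖u (a,s)‖)] at *; exact this
      simp only [abs_two]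
      nlinarith [abs_nonneg (k (a,s))]
    have hmono2 : ∫ s in t..d, 2 * (‖u (a,s)‖ * ‖P₂ (a,s)‖)
        ≤ ∫ s in (0:ℝ)..d, 2 * (‖u (a,s)‖ * ‖P₂ (a,s)‖) := by
      refine intervalIntegral.integral_mono_interval ht.1 ht.2 le_rfl
        (Eventually.of_forall fun s => by positivity) (hcUP.intervalIntegrable 0 d)
    have hWrw : ∫ s in (0:ℝ)..d, 2 * (‖u (a,s)‖ * ‖P₂ (a,s)‖) = 2 * Wfun a := by
      rw [intervalIntegral.integral_of_le hd.le, integral_Ioc_eq_integral_Ioo,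
        integral_const_mul, hWdef]
    linarith [le_abs_self (∫ s in t..d, 2 * k (a,s))]
  have hIoocst : ∀ c : ℝ, ∫ _t in Ioo (0:ℝ) d, c = c * d := by
    intro c
    rw [setIntegral_const, Real.volume_real_Ioo_of_le hd.le, smul_eq_mul, sub_zero, mul_comm]
  have htrace : ∀ (a : ℝ) (y : ℝ), (∀ t ∈ Icc (0:ℝ) d, ‖u (a,y)‖^2 ≤ ‖u (a,t)‖^2 + 2 * Wfun a) →
      ‖u (a,y)‖^2 ≤ Jfun a / d + 2 * Wfun a := by
    intro a y hkey
    have hiu : IntegrableOn (fun t => ‖u (a,t)‖^2) (Ioo 0 d) := hioo _ (by fun_prop)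
    have hRHS : IntegrableOn (fun t => ‖u (a,t)‖^2 + 2 * Wfun a) (Ioo 0 d) :=
      hiu.add (integrableOn_const measure_Ioo_lt_top.ne)
    have hm := setIntegral_mono_on
      (f := fun _ => ‖u (a,y)‖^2)
      (integrableOn_const measure_Ioo_lt_top.ne) hRHS measurableSet_Ioo
      (fun t ht => hkey t (Ioo_subset_Icc_self ht))
    rw [hIoocst, integral_add hiu (integrableOn_const measure_Ioo_lt_top.ne),
      hIoocst] at hm
    have hJ : (∫ t in Ioo 0 d, ‖u (a,t)‖^2) = Jfun a := rfl
    rw [hJ] at hm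
    have h' : ‖u (a,y)‖^2 * d ≤ (Jfun a / d + 2 * Wfun a) * d := by
      rw [add_mul, div_mul_cancel₀ _ (ne_of_gt hd)]
      nlinarith [hm]
    exact le_of_mul_le_mul_right h' hd
  have htr0 : ∀ a : ℝ, ‖u (a,0)‖^2 ≤ Jfun a / d + 2 * Wfun a :=
    fun a => htrace a 0 (hkey0 a)
  have htrd : ∀ a : ℝ, ‖u (a,d)‖^2 ≤ Jfun a / d + 2 * Wfun a :=
    fun a => htrace a d (hkeyd a)
  -- trace integrability
  have hRint : Integrable (fun a => Jfun a / d + 2 * Wfun a) volume :=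
    (iJ.div_const d).add (iW.const_mul 2)
  have iT0' : Integrable (fun a => ‖u (a,0)‖^2) volume := by
    refine hRint.mono' (Continuous.aestronglyMeasurable (by fun_prop))
      (Eventually.of_forall fun a => ?_)
    rw [Real.norm_eq_abs, abs_of_nonneg (by positivity)]
    exact htr0 a
  have iTd' : Integrable (fun a => ‖u (a,d)‖^2) volume := by
    refine hRint.mono' (Continuous.aestronglyMeasurable (by fun_prop))
      (Eventually.of_forall fun a => ?_)
    rw [Real.norm_eq_abs, abs_of_nonneg (by positivity)]
    exact htrd a
  set T0 : ℝ := ∫ a, ‖u (a,0)‖^2 with hT0def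
  set Td : ℝ := ∫ a, ‖u (a,d)‖^2 with hTddef
  have hRval : ∫ a, (Jfun a / d + 2 * Wfun a) = M / d + 2 * (∫ a, Wfun a) := by
    rw [integral_add (iJ.div_const d) (iW.const_mul 2), integral_div, integral_const_mul, hJint]
  have hT0 : T0 ≤ M / d + (M + B') := by
    have h1 : T0 ≤ ∫ a, (Jfun a / d + 2 * Wfun a) :=
      integral_mono iT0' hRint fun a => htr0 a
    rw [hRval] at h1
    linarith [h2W]
  have hTd : Td ≤ M / d + (M + B') := by
    have h1 : Td ≤ ∫ a, (Jfun a / d + 2 * Wfun a) :=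
      integral_mono iTd' hRint fun a => htrd a
    rw [hRval] at h1
    linarith [h2W]
  -- the boundary terms
  have hk0 : ∀ a : ℝ, k (a, 0) = (φ0 a * (starRingEnd ℂ) (u (a,0))).re := by
    intro a
    have hb : P₂ (a,0) + Complex.I * α₀ * u (a,0) = φ0 a := hb0 a
    have h2 : P₂ (a,0) = φ0 a - Complex.I * α₀ * u (a,0) := by linear_combination hb
    simp only [hkdef]
    rw [h2, sub_mul, Complex.sub_re]
    have h3 : (Complex.I * ↑α₀ * u (a,0) * (starRingEnd ℂ) (u (a,0))).re = 0 := by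
      rw [mul_assoc, Complex.mul_conj]
      simp [Complex.mul_re, Complex.mul_im]
    rw [h3, sub_zero]
  have hkd : ∀ a : ℝ, k (a, d) = (φd a * (starRingEnd ℂ) (u (a,d))).re := by
    intro a
    have hb : P₂ (a,d) + Complex.I * α₀ * u (a,d) = φd a := hbd a
    have h2 : P₂ (a,d) = φd a - Complex.I * α₀ * u (a,d) := by linear_combination hb
    simp only [hkdef]
    rw [h2, sub_mul, Complex.sub_re]
    have h3 : (Complex.I * ↑α₀ * u (a,d) * (starRingEnd ℂ) (u (a,d))).re = 0 := by
      rw [mul_assoc, Complex.mul_conj]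
      simp [Complex.mul_re, Complex.mul_im]
    rw [h3, sub_zero]
  set bdf : ℝ → ℝ := fun a => k (a, d) - k (a, 0) with hbdfdef
  have hbdc : Continuous bdf := (hkc.comp (by fun_prop)).sub (hkc.comp (by fun_prop))
  have iφ02 : Integrable (fun a => ‖φ0 a‖^2) volume :=
    (memLp_two_iff_integrable_sq_norm hφ0.aestronglyMeasurable).1 hφ0
  have iφd2 : Integrable (fun a => ‖φd a‖^2) volume :=
    (memLp_two_iff_integrable_sq_norm hφd.aestronglyMeasurable).1 hφd
  set P0 : ℝ := ∫ a, ‖φ0 a‖^2 with hP0def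
  set Pd : ℝ := ∫ a, ‖φd a‖^2 with hPddef
  have hbdpt : ∀ a : ℝ, bdf a ≤ (1/(2*K₀)) * (‖u (a,0)‖^2 + ‖u (a,d)‖^2)
      + (K₀/2) * (‖φ0 a‖^2 + ‖φd a‖^2) := by
    intro a
    have e0 := hk0 a
    have ed := hkd a
    have a0 := abs_re_mul_conj (φ0 a) (u (a,0))
    have ad := abs_re_mul_conj (φd a) (u (a,d))
    have g0 : - (k (a,0)) ≤ ‖φ0 a‖ * ‖u (a,0)‖ := by
      rw [e0]; linarith [neg_abs_le ((φ0 a * (starRingEnd ℂ) (u (a,0))).re)]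
    have gd : k (a,d) ≤ ‖φd a‖ * ‖u (a,d)‖ := by
      rw [ed]; linarith [le_abs_self ((φd a * (starRingEnd ℂ) (u (a,d))).re)]
    have am0 : ‖φ0 a‖ * ‖u (a,0)‖ ≤ (1/(2*K₀)) * ‖u (a,0)‖^2 + (K₀/2) * ‖φ0 a‖^2 := amgm' hK₀
    have amd : ‖φd a‖ * ‖u (a,d)‖ ≤ (1/(2*K₀)) * ‖u (a,d)‖^2 + (K₀/2) * ‖φd a‖^2 := amgm' hK₀
    simp only [hbdfdef]
    linarith
  have ibd : Integrable bdf volume := by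
    have ig : Integrable (fun a => (1/(2*K₀)) * (‖u (a,0)‖^2 + ‖u (a,d)‖^2)
        + ((K₀/2) * (‖φ0 a‖^2 + ‖φd a‖^2) + (‖u (a,0)‖^2 + ‖u (a,d)‖^2))) volume := by
      have i1 : Integrable (fun a => ‖u (a,0)‖^2 + ‖u (a,d)‖^2) volume := iT0'.add iTd'
      have i2 : Integrable (fun a => ‖φ0 a‖^2 + ‖φd a‖^2) volume := iφ02.add iφd2
      exact (i1.const_mul _).add ((i2.const_mul _).add i1)
    refine ig.mono' hbdc.aestronglyMeasurable (Eventually.of_forall fun a => ?_)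
    rw [Real.norm_eq_abs, abs_le]
    constructor
    · -- lower bound : -g ≤ bdf
      have e0 := hk0 a
      have ed := hkd a
      have a0 := abs_re_mul_conj (φ0 a) (u (a,0))
      have ad := abs_re_mul_conj (φd a) (u (a,d))
      have g0 : k (a,0) ≤ ‖φ0 a‖ * ‖u (a,0)‖ := by
        rw [e0]; linarith [le_abs_self ((φ0 a * (starRingEnd ℂ) (u (a,0))).re)]
      have gd : - (k (a,d)) ≤ ‖φd a‖ * ‖u (a,d)‖ := by
        rw [ed]; linarith [neg_abs_le ((φd a * (starRingEnd ℂ) (u (a,d))).re)]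
      have am0 : ‖φ0 a‖ * ‖u (a,0)‖ ≤ K₀/2 * ‖φ0 a‖^2 + ‖u (a,0)‖^2/2 + ‖u (a,0)‖^2/2 :=
        amgm2 hK₀1
      have amd : ‖φd a‖ * ‖u (a,d)‖ ≤ K₀/2 * ‖φd a‖^2 + ‖u (a,d)‖^2/2 + ‖u (a,d)‖^2/2 :=
        amgm2 hK₀1
      have hpos : 0 ≤ (1/(2*K₀)) * (‖u (a,0)‖^2 + ‖u (a,d)‖^2) := by
        have h9 : (0:ℝ) ≤ 1/(2*K₀) := by rw [one_div]; exact inv_nonneg.mpr (by linarith)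
        exact mul_nonneg h9 (by positivity)
      simp only [hbdfdef]
      linarith
    · have h1 := hbdpt a
      have hpos : 0 ≤ ‖u (a,0)‖^2 + ‖u (a,d)‖^2 := by positivity
      simp only [hbdfdef] at h1 ⊢
      linarith
  have hbdle : ∫ a, bdf a ≤ (1/(2*K₀)) * (T0 + Td) + (K₀/2) * (P0 + Pd) := by
    have i1 : Integrable (fun a => ‖u (a,0)‖^2 + ‖u (a,d)‖^2) volume := iT0'.add iTd'
    have i2 : Integrable (fun a => ‖φ0 a‖^2 + ‖φd a‖^2) volume := iφ02.add iφd2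
    have ig : Integrable (fun a => (1/(2*K₀)) * (‖u (a,0)‖^2 + ‖u (a,d)‖^2)
        + (K₀/2) * (‖φ0 a‖^2 + ‖φd a‖^2)) volume := (i1.const_mul _).add (i2.const_mul _)
    have hmono := integral_mono ibd ig hbdpt
    rw [integral_add (i1.const_mul _) (i2.const_mul _), integral_const_mul, integral_const_mul,
      integral_add iT0' iTd', integral_add iφ02 iφd2] at hmono
    exact hmono
  -- integrability of G and H₁ and vanishing of ∫ H₁
  set RG : ℝ → ℝ := fun a => ∫ t in Ioo 0 d, (‖u (a,t)‖^2 + ‖P₁ (a,t)‖^2) with hRGdef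
  have iRG : Integrable RG volume := iMP1p.integral_prod_left
  have hGle : ∀ a : ℝ, |G a| ≤ RG a := by
    intro a
    have hih : IntegrableOn (fun t => |h (a,t)|) (Ioo 0 d) :=
      hioo _ ((hhc.comp (by fun_prop : Continuous fun t : ℝ => (a,t))).abs)
    have hiR : IntegrableOn (fun t => ‖u (a,t)‖^2 + ‖P₁ (a,t)‖^2) (Ioo 0 d) :=
      hioo _ (by fun_prop)
    have h1 : |G a| ≤ ∫ t in Ioo 0 d, |h (a,t)| := by
      simpa [Real.norm_eq_abs] using
        norm_integral_le_integral_norm (μ := volume.restrict (Ioo 0 d)) (fun t => h (a,t))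
    refine h1.trans ?_
    refine setIntegral_mono_on hih hiR measurableSet_Ioo fun t _ => ?_
    have h2 : |h (a,t)| ≤ ‖P₁ (a,t)‖ * ‖u (a,t)‖ := by
      simp only [hhdef]; exact abs_re_mul_conj _ _
    nlinarith [sq_nonneg (‖P₁ (a,t)‖ - ‖u (a,t)‖), norm_nonneg (P₁ (a,t)), norm_nonneg (u (a,t))]
  have hGc : Continuous G := continuous_iff_continuousAt.mpr fun a => (HG a).continuousAt
  have iG : Integrable G volume := by
    refine iRG.mono' hGc.aestronglyMeasurable (Eventually.of_forall fun a => ?_)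
    rw [Real.norm_eq_abs]; exact hGle a
  set Fint : ℝ → ℝ := fun a => ∫ t in Ioo 0 d, e (a,t) with hFintdef
  have iFint : Integrable Fint volume := ieP.integral_prod_left
  have iH₁ : Integrable H₁ volume := by
    have hfe : H₁ = fun a => Fint a - bdf a := by
      funext a
      have h4 := hS4 a
      simp only [hFintdef, hbdfdef, hH₁def] at h4 ⊢
      linarith
    rw [hfe]
    exact iFint.sub ibd
  have hH₁0 : ∫ a, H₁ a = 0 := integral_deriv_eq_zero' G H₁ HG iG iH₁
  -- main identity
  have hmain : (-z) * M + (A' + B') = ∫ a, bdf a := by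
    have h1 : ∫ x in Ω, e x = ∫ a, Fint a := hfub
    have h2 : ∫ a, Fint a = ∫ a, (H₁ a + bdf a) := by
      refine integral_congr_ae (Eventually.of_forall fun a => ?_)
      have h4 := hS4 a
      simp only [hFintdef, hbdfdef, hH₁def] at h4 ⊢
      linarith
    rw [← hval, h1, h2, integral_add iH₁ ibd, hH₁0, zero_add]
  -- nonnegativity
  have hMn : (0:ℝ) ≤ M := integral_nonneg fun x => by positivity
  have hA'n : (0:ℝ) ≤ A' := integral_nonneg fun x => by positivity
  have hB'n : (0:ℝ) ≤ B' := integral_nonneg fun x => by positivity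
  have hDDn : (0:ℝ) ≤ DD := integral_nonneg fun x => by positivity
  have hT0n : (0:ℝ) ≤ T0 := integral_nonneg fun x => by positivity
  have hTdn : (0:ℝ) ≤ Td := integral_nonneg fun x => by positivity
  have hP0n : (0:ℝ) ≤ P0 := integral_nonneg fun x => by positivity
  have hPdn : (0:ℝ) ≤ Pd := integral_nonneg fun x => by positivity
  -- numeric endgame
  have hTK : T0 + Td ≤ K₀ * (M + (A' + B')) := by
    have h1d : (0:ℝ) < 1/d := by positivity
    have e1 : K₀ * (M + (A' + B')) = (2*(1/d) + 2) * (M + (A' + B')) := by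
      rw [hK₀def]; ring
    have e2 : M/d = M * (1/d) := by ring
    rw [e1]
    have h3 : T0 + Td ≤ 2*(M * (1/d) + M + B') := by rw [← e2]; linarith [hT0, hTd]
    refine h3.trans ?_
    nlinarith [mul_nonneg h1d.le hA'n, mul_nonneg h1d.le hB'n, mul_nonneg h1d.le hMn]
  have hN' : M + (A' + B') ≤ K₀ * (P0 + Pd) := by
    have hzM : M ≤ (-z) * M := by nlinarith [hMn]
    have h5 : (1/(2*K₀)) * (T0 + Td) ≤ (1/(2*K₀)) * (K₀ * (M + (A' + B'))) :=
      mul_le_mul_of_nonneg_left hTK (by rw [one_div]; exact inv_nonneg.mpr (by linarith))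
    have h6 : (1/(2*K₀)) * (K₀ * (M + (A' + B'))) = (M + (A' + B'))/2 := by
      have hK2 : (2*K₀) ≠ 0 := ne_of_gt (by linarith)
      field_simp
    linarith [hmain, hbdle, h5, h6.le, h6.ge]
  have hDD2 : DD ≤ 2 * (A' + B') := by
    have i23' : Integrable (fun x => 2*(‖P₁ x‖^2 + ‖P₂ x‖^2)) ν :=
      (show Integrable (fun x => ‖P₁ x‖^2 + ‖P₂ x‖^2) ν from iP1.add iP2).const_mul 2
    have hpt : ∀ x, ‖fderiv ℝ u x‖^2 ≤ 2*(‖P₁ x‖^2 + ‖P₂ x‖^2) := by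
      intro x
      have h1 := opnorm_le_sum' (fderiv ℝ u x)
      nlinarith [norm_nonneg (fderiv ℝ u x), norm_nonneg (P₁ x), norm_nonneg (P₂ x),
        sq_nonneg (‖P₁ x‖ - ‖P₂ x‖)]
    have hm := integral_mono iD i23' hpt
    rw [integral_const_mul, integral_add iP1 iP2] at hm
    exact hm
  have hfinal : M + DD ≤ (2*K₀) * (P0 + Pd) := by nlinarith [hN', hDD2, hMn, hK₀]
  calc Real.sqrt (M + DD) ≤ Real.sqrt ((2*K₀) * (P0 + Pd)) := Real.sqrt_le_sqrt hfinal
    _ = Real.sqrt (2*K₀) * Real.sqrt (P0 + Pd) := Real.sqrt_mul (by linarith) _
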